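/- Let X be a compact Hausdorff space of countable tightness and let F = {F_n : n ∈ ω} be a countable filter base in X with F_{n+1} ⊆ F_n. Then there exists a point x ∈ ⋂_{n} closure(F_n) and a countable family A of nonempty sets, each of which meets every F_n, such that A is a local π-net at x: every neighbourhood of x contains a member of A. -/

import Mathlib

open Set Topology Cardinal Ordinal
open scoped Cardinal

namespace JSzProof
open scoped Classical
set_option linter.unusedSectionVars false

variable {X : Type*} [TopologicalSpace X]

/-- The set determined by a "pattern": intersect second components over `F1`
(the "1"-side) and first components over `F0` (the "0"-side). -/
def patt (q : Ordinal → Set X × Set X) (F1 F0 : Finset Ordinal) : Set X :=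
  (⋂ β ∈ F1, (q β).2) ∩ ⋂ γ ∈ F0, (q γ).1

lemma mem_patt {q : Ordinal → Set X × Set X} {F1 F0 : Finset Ordinal} {y : X} :
    y ∈ patt q F1 F0 ↔ (∀ β ∈ F1, y ∈ (q β).2) ∧ ∀ γ ∈ F0, y ∈ (q γ).1 := by
  simp [patt]

lemma patt_congr {q q' : Ordinal → Set X × Set X} {F1 F0 : Finset Ordinal}
    (h1 : ∀ β ∈ F1, q β = q' β) (h0 : ∀ γ ∈ F0, q γ = q' γ) :
    patt q F1 F0 = patt q' F1 F0 := by
  unfold patt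
  refine congrArg₂ (· ∩ ·) ?_ ?_
  · exact Set.iInter₂_congr fun β hβ => by rw [h1 β hβ]
  · exact Set.iInter₂_congr fun γ hγ => by rw [h0 γ hγ]

/-- A decreasing pattern below `ξ`: all indices below `ξ`, and every "1"-index
is below every "0"-index. -/
def Valid (ξ : Ordinal) (F1 F0 : Finset Ordinal) : Prop :=
  (∀ β ∈ F1, β < ξ) ∧ (∀ γ ∈ F0, γ < ξ) ∧ ∀ β ∈ F1, ∀ γ ∈ F0, β < γ

/-- `V = (V⁰, V¹)` is a good pair at stage `ξ` relative to previous data `q`. -/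
structure Good (F : ℕ → Set X) (ξ : Ordinal) (q : Ordinal → Set X × Set X)
    (V : Set X × Set X) : Prop where
  open0 : IsOpen V.1
  open1 : IsOpen V.2
  disj : closure V.1 ∩ closure V.2 = ∅
  pos0 : ∀ F1 F0, Valid ξ F1 F0 → ∀ n, (F n ∩ patt q F1 F0 ∩ V.1).Nonempty
  pos1 : ∀ F1, Valid ξ F1 ∅ → ∀ n, (F n ∩ patt q F1 ∅ ∩ V.2).Nonempty

noncomputable def pair (F : ℕ → Set X) : Ordinal → Set X × Set X :=
  Ordinal.lt_wf.fix fun ξ ih =>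
    if h : ∃ V : Set X × Set X,
        Good F ξ (fun β => if hβ : β < ξ then ih β hβ else (∅, ∅)) V
    then h.choose else (∅, ∅)

noncomputable def prior (F : ℕ → Set X) (ξ : Ordinal) : Ordinal → Set X × Set X :=
  fun β => if _ : β < ξ then pair F β else (∅, ∅)

lemma prior_eq (F : ℕ → Set X) {ξ β : Ordinal} (h : β < ξ) :
    prior F ξ β = pair F β := dif_pos h

lemma pair_def (F : ℕ → Set X) (ξ : Ordinal) :
    pair F ξ = if h : ∃ V : Set X × Set X, Good F ξ (prior F ξ) V
      then h.choose else (∅, ∅) := by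
  show Ordinal.lt_wf.fix _ ξ = _
  rw [WellFounded.fix_eq]
  rfl

lemma good_choose (F : ℕ → Set X) {ξ : Ordinal}
    (h : ∃ V : Set X × Set X, Good F ξ (prior F ξ) V) :
    Good F ξ (prior F ξ) (pair F ξ) := by
  rw [pair_def, dif_pos h]
  exact h.choose_spec

/-- positivity of all decreasing patterns, from goodness at all earlier stages -/
lemma pos_of_good (F : ℕ → Set X) (hFne : ∀ n, (F n).Nonempty) {ξ : Ordinal}
    (hg : ∀ μ, μ < ξ → Good F μ (prior F μ) (pair F μ)) :
    ∀ F1 F0, Valid ξ F1 F0 → ∀ n, (F n ∩ patt (pair F) F1 F0).Nonempty := by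
  intro F1 F0 hval n
  rcases (F1 ∪ F0).eq_empty_or_nonempty with h | h
  · obtain ⟨h1, h0⟩ := Finset.union_eq_empty.mp h
    subst h1; subst h0
    obtain ⟨y, hy⟩ := hFne n
    exact ⟨y, hy, by simp [mem_patt]⟩
  · set μ := (F1 ∪ F0).max' h with hμdef
    have hμmem : μ ∈ F1 ∪ F0 := (F1 ∪ F0).max'_mem h
    have hle : ∀ b ∈ F1 ∪ F0, b ≤ μ := fun b hb => Finset.le_max' _ b hb
    have hμξ : μ < ξ := by
      rcases Finset.mem_union.mp hμmem with h' | h'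
      exacts [hval.1 _ h', hval.2.1 _ h']
    have hGμ := hg μ hμξ
    rcases Finset.mem_union.mp hμmem with hμ1 | hμ0
    · -- μ is on the 1-side, hence F0 = ∅
      have hF0 : F0 = ∅ := by
        by_contra hne'
        obtain ⟨γ, hγ⟩ := Finset.nonempty_iff_ne_empty.mpr hne'
        exact absurd (hval.2.2 μ hμ1 γ hγ)
          (not_lt.mpr (hle γ (Finset.mem_union_right _ hγ)))
      subst hF0
      have hval' : Valid μ (F1.erase μ) ∅ := by
        refine ⟨fun β hβ => ?_, by simp, by simp⟩
        exact lt_of_le_of_ne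
          (hle β (Finset.mem_union_left _ (Finset.mem_of_mem_erase hβ)))
          (Finset.ne_of_mem_erase hβ)
      obtain ⟨y, hy⟩ := hGμ.pos1 (F1.erase μ) hval' n
      refine ⟨y, hy.1.1, mem_patt.mpr ⟨fun β hβ => ?_, by simp⟩⟩
      by_cases hβμ : β = μ
      · subst hβμ; exact hy.2
      · have hβ' : β ∈ F1.erase μ := Finset.mem_erase.mpr ⟨hβμ, hβ⟩
        have := (mem_patt.mp hy.1.2).1 β hβ'
        rwa [prior_eq F (hval'.1 β hβ')] at this
    · -- μ is on the 0-side
      have hμn1 : μ ∉ F1 := fun hμ1 => (lt_irrefl μ (hval.2.2 μ hμ1 μ hμ0))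
      have hval' : Valid μ F1 (F0.erase μ) := by
        refine ⟨fun β hβ => hval.2.2 β hβ μ hμ0, fun γ hγ => ?_, fun β hβ γ hγ =>
          hval.2.2 β hβ γ (Finset.mem_of_mem_erase hγ)⟩
        exact lt_of_le_of_ne
          (hle γ (Finset.mem_union_right _ (Finset.mem_of_mem_erase hγ)))
          (Finset.ne_of_mem_erase hγ)
      obtain ⟨y, hy⟩ := hGμ.pos0 F1 (F0.erase μ) hval' n
      refine ⟨y, hy.1.1, mem_patt.mpr ⟨fun β hβ => ?_, fun γ hγ => ?_⟩⟩
      · have := (mem_patt.mp hy.1.2).1 β hβ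
        rwa [prior_eq F (hval'.1 β hβ)] at this
      · by_cases hγμ : γ = μ
        · subst hγμ; exact hy.2
        · have hγ' : γ ∈ F0.erase μ := Finset.mem_erase.mpr ⟨hγμ, hγ⟩
          have := (mem_patt.mp hy.1.2).2 γ hγ'
          rwa [prior_eq F (hval'.2.1 γ hγ')] at this


/-- countability of an initial segment below ω₁ -/
lemma countable_Iio_of_lt {μ : Ordinal} (h : μ < (Cardinal.aleph 1).ord) :
    (Set.Iio μ).Countable := by
  rw [Cardinal.countable_iff_lt_aleph_one, Ordinal.mk_Iio_ordinal]
  have h1 : μ.card < ℵ₁ := Cardinal.lt_ord.mp h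
  exact lt_of_not_ge fun hc => absurd (Cardinal.aleph_one_le_lift.mp hc) (not_le.mpr h1)

/-- The key step: a good pair exists, assuming the theorem's conclusion fails. -/
lemma exists_good [CompactSpace X] [T2Space X]
    (F : ℕ → Set X) (hFne : ∀ n, (F n).Nonempty) (hFanti : Antitone F)
    (hcon : ∀ x ∈ ⋂ n, closure (F n), ∀ A : Set (Set X), A.Countable →
      (∀ a ∈ A, a.Nonempty ∧ ∀ n, (a ∩ F n).Nonempty) →
      ∃ U ∈ nhds x, ∀ a ∈ A, ¬ a ⊆ U)
    {μ : Ordinal} (hμc : (Set.Iio μ).Countable)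
    (q : Ordinal → Set X × Set X)
    (hQ : ∀ F1 F0, Valid μ F1 F0 → ∀ n, (F n ∩ patt q F1 F0).Nonempty) :
    ∃ V : Set X × Set X, Good F μ q V := by
  classical
  have hval1 : ∀ (s : Finset Ordinal), (∀ β ∈ s, β < μ) → Valid μ s ∅ :=
    fun s hs => ⟨hs, by simp, by simp⟩
  -- the point z
  set ι : Type _ := {s : Finset Ordinal // ∀ β ∈ s, β < μ} × ℕ with hι
  set Z : ι → Set X := fun i => closure (F i.2 ∩ patt q i.1.1 ∅) with hZ
  have hZne : ∀ i, (Z i).Nonempty := fun i =>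
    ((hQ i.1.1 ∅ (hval1 _ i.1.2) i.2).mono subset_closure)
  have hZsub : ∀ (s t : Finset Ordinal) (n m : ℕ), s ⊆ t → n ≤ m →
      (F m ∩ patt q t ∅) ⊆ (F n ∩ patt q s ∅) := by
    intro s t n m hst hnm y hy
    refine ⟨hFanti hnm hy.1, mem_patt.mpr ⟨fun β hβ => (mem_patt.mp hy.2).1 β (hst hβ), by simp⟩⟩
  have hZdir : Directed (fun a b : Set X => a ⊇ b) Z := by
    rintro ⟨⟨s, hs⟩, n⟩ ⟨⟨t, ht⟩, m⟩
    refine ⟨⟨⟨s ∪ t, ?_⟩, max n m⟩, ?_, ?_⟩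
    · intro β hβ
      rcases Finset.mem_union.mp hβ with h | h
      exacts [hs β h, ht β h]
    · exact closure_mono (hZsub _ _ _ _ Finset.subset_union_left (le_max_left n m))
    · exact closure_mono (hZsub _ _ _ _ Finset.subset_union_right (le_max_right n m))
  have hιne : Nonempty ι := ⟨⟨⟨∅, by simp⟩, 0⟩⟩
  obtain ⟨z, hz⟩ := IsCompact.nonempty_iInter_of_directed_nonempty_isCompact_isClosed
    Z hZdir hZne (fun i => isClosed_closure.isCompact) (fun i => isClosed_closure)
  have hzb : ∀ (s : Finset Ordinal) (hs : ∀ β ∈ s, β < μ) (n : ℕ),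
      z ∈ closure (F n ∩ patt q s ∅) := fun s hs n => (mem_iInter.mp hz) ⟨⟨s, hs⟩, n⟩
  have hzK : z ∈ ⋂ n, closure (F n) := by
    refine mem_iInter.mpr fun n => ?_
    exact closure_mono inter_subset_left (hzb ∅ (by simp) n)
  -- the countable family A
  obtain ⟨e, he⟩ : ∃ e : ℕ → Ordinal, Set.Iio μ ⊆ Set.range e := by
    rcases Set.eq_empty_or_nonempty (Set.Iio μ) with h | h
    · exact ⟨fun _ => 0, by rw [h]; exact empty_subset _⟩
    · obtain ⟨e, he⟩ := Set.Countable.exists_eq_range hμc h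
      exact ⟨e, he.le⟩
  set Φ : Finset ℕ × Finset ℕ × ℕ → Set X := fun p =>
    if Valid μ (p.1.image e) (p.2.1.image e) then
      F p.2.2 ∩ patt q (p.1.image e) (p.2.1.image e) else F 0 with hΦ
  have hAc : (Set.range Φ).Countable := Set.countable_range Φ
  have hAg : ∀ a ∈ Set.range Φ, a.Nonempty ∧ ∀ n, (a ∩ F n).Nonempty := by
    rintro a ⟨⟨s, t, n⟩, rfl⟩
    by_cases h : Valid μ (s.image e) (t.image e)
    · simp only [hΦ, if_pos h]
      refine ⟨hQ _ _ h n, fun m => ?_⟩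
      obtain ⟨y, hy⟩ := hQ _ _ h (max n m)
      exact ⟨y, ⟨hFanti (le_max_left n m) hy.1, hy.2⟩, hFanti (le_max_right n m) hy.1⟩
    · simp only [hΦ, if_neg h]
      refine ⟨hFne 0, fun m => ?_⟩
      obtain ⟨y, hy⟩ := hFne m
      exact ⟨y, hFanti (Nat.zero_le m) hy, hy⟩
  obtain ⟨U, hU, hUa⟩ := hcon z hzK (Set.range Φ) hAc hAg
  -- shrink twice
  obtain ⟨t₁, ht₁, ht₁c, ht₁U⟩ := exists_mem_nhds_isClosed_subset hU
  set N : Set X := interior t₁ with hN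
  have hNopen : IsOpen N := isOpen_interior
  have hzN : z ∈ N := mem_interior_iff_mem_nhds.mpr ht₁
  have hclN : closure N ⊆ U := (closure_minimal interior_subset ht₁c).trans ht₁U
  obtain ⟨t₂, ht₂, ht₂c, ht₂N⟩ := exists_mem_nhds_isClosed_subset (hNopen.mem_nhds hzN)
  set N' : Set X := interior t₂ with hN'
  have hzN' : z ∈ N' := mem_interior_iff_mem_nhds.mpr ht₂
  have hclN' : closure N' ⊆ N := (closure_minimal interior_subset ht₂c).trans ht₂N
  -- membership of pattern sets in the family
  have hmemA : ∀ F1 F0, Valid μ F1 F0 → ∀ n, F n ∩ patt q F1 F0 ∈ Set.range Φ := by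
    intro F1 F0 hval n
    have hrange : ∀ (s : Finset Ordinal), (∀ β ∈ s, β < μ) →
        ∃ s' : Finset ℕ, s'.image e = s := by
      intro s hs
      have : ∀ β ∈ s, ∃ k, e k = β := fun β hβ => he (hs β hβ)
      choose g hg using this
      refine ⟨s.attach.image (fun b => g b.1 b.2), ?_⟩
      ext a
      simp only [Finset.mem_image, Finset.mem_attach, true_and, Subtype.exists]
      constructor
      · rintro ⟨k, ⟨b, hb, rfl⟩, rfl⟩
        rw [hg b hb]; exact hb
      · intro ha
        exact ⟨g a ha, ⟨a, ha, rfl⟩, hg a ha⟩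
    obtain ⟨s', hs'⟩ := hrange F1 hval.1
    obtain ⟨t', ht'⟩ := hrange F0 hval.2.1
    refine ⟨⟨s', t', n⟩, ?_⟩
    simp only [hΦ, hs', ht', if_pos hval]
  refine ⟨((closure N)ᶜ, N'), ⟨isClosed_closure.isOpen_compl, isOpen_interior, ?_, ?_, ?_⟩⟩
  · -- disjoint closures
    have h1 : N ∩ closure ((closure N)ᶜ) = ∅ := by
      have h2 : N ∩ (closure N)ᶜ = ∅ := by
        apply Set.eq_empty_of_subset_empty
        intro y hy
        exact absurd (subset_closure hy.1) hy.2
      apply Set.eq_empty_of_subset_empty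
      calc N ∩ closure ((closure N)ᶜ) ⊆ closure (N ∩ (closure N)ᶜ) := hNopen.inter_closure
        _ = ∅ := by rw [h2, closure_empty]
    apply Set.eq_empty_of_subset_empty
    intro y hy
    have hyN : y ∈ N := hclN' hy.2
    rw [← h1]
    exact ⟨hyN, hy.1⟩
  · -- pos0
    intro F1 F0 hval n
    have := hUa _ (hmemA F1 F0 hval n)
    rw [Set.not_subset] at this
    obtain ⟨y, hy, hyU⟩ := this
    exact ⟨y, hy, fun hyc => hyU (hclN hyc)⟩
  · -- pos1
    intro F1 hval n
    have hzc := hzb F1 hval.1 n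
    obtain ⟨y, hy1, hy2⟩ := mem_closure_iff.mp hzc N' isOpen_interior hzN'
    exact ⟨y, hy2, hy1⟩

/-- goodness holds at every stage below ω₁ -/
lemma good_all [CompactSpace X] [T2Space X]
    (F : ℕ → Set X) (hFne : ∀ n, (F n).Nonempty) (hFanti : Antitone F)
    (hcon : ∀ x ∈ ⋂ n, closure (F n), ∀ A : Set (Set X), A.Countable →
      (∀ a ∈ A, a.Nonempty ∧ ∀ n, (a ∩ F n).Nonempty) →
      ∃ U ∈ nhds x, ∀ a ∈ A, ¬ a ⊆ U) :
    ∀ μ, μ < (Cardinal.aleph 1).ord → Good F μ (prior F μ) (pair F μ) := by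
  intro μ
  induction μ using Ordinal.induction with
  | h μ IH =>
  intro hμ
  have hQ : ∀ F1 F0, Valid μ F1 F0 → ∀ n, (F n ∩ patt (prior F μ) F1 F0).Nonempty := by
    intro F1 F0 hv n
    have hpos := pos_of_good F hFne
      (ξ := μ) (fun η hη => IH η hη (hη.trans hμ)) F1 F0 hv n
    rwa [patt_congr (fun β hβ => (prior_eq F (hv.1 β hβ)).symm)
      (fun γ hγ => (prior_eq F (hv.2.1 γ hγ)).symm)] at hpos
  exact good_choose F (exists_good F hFne hFanti hcon (countable_Iio_of_lt hμ) (prior F μ) hQ)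

end JSzProof

/-- In a compact Hausdorff space of countable tightness, for every decreasing
countable filter base ⟨F_n⟩ there is a point x in the intersection of the
closures of the F_n together with a countable local π-net at x consisting of
sets positive with respect to the filter base. -/
theorem pi_net_from_countable_filter_base
    {X : Type*} [TopologicalSpace X] [CompactSpace X] [T2Space X]
    (hct : ∀ (S : Set X) (p : X), p ∈ closure S →
      ∃ T, T ⊆ S ∧ T.Countable ∧ p ∈ closure T)
    (F : ℕ → Set X) (hFne : ∀ n, (F n).Nonempty)
    (hFdec : ∀ n, F (n + 1) ⊆ F n) :
    ∃ x ∈ ⋂ n, closure (F n), ∃ A : Set (Set X),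
      A.Countable ∧
      (∀ a ∈ A, a.Nonempty ∧ ∀ n, (a ∩ F n).Nonempty) ∧
      (∀ U ∈ nhds x, ∃ a ∈ A, a ⊆ U) := by
  classical
  by_contra hcon
  push_neg at hcon
  have hFanti : Antitone F := antitone_nat_of_succ_le hFdec
  set w1 : Ordinal.{0} := (Cardinal.aleph 1).ord with hw1def
  have hcon' : ∀ x ∈ ⋂ n, closure (F n), ∀ A : Set (Set X), A.Countable →
      (∀ a ∈ A, a.Nonempty ∧ ∀ n, (a ∩ F n).Nonempty) →
      ∃ U ∈ nhds x, ∀ a ∈ A, ¬ a ⊆ U := by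
    intro x hx A hAc hAg
    exact hcon x hx A hAc hAg
  have hgood : ∀ μ, μ < w1 → JSzProof.Good F μ (JSzProof.prior F μ) (JSzProof.pair F μ) :=
    JSzProof.good_all F hFne hFanti hcon'
  have hpos : ∀ F1 F0, JSzProof.Valid w1 F1 F0 → ∀ n,
      (F n ∩ JSzProof.patt (JSzProof.pair F) F1 F0).Nonempty :=
    JSzProof.pos_of_good F hFne (fun μ h => hgood μ h)
  set V : Ordinal.{0} → Set X × Set X := JSzProof.pair F with hV
  -- the points x_α
  have hx : ∀ α : Ordinal.{0}, α < w1 → ∃ z : X, (∀ β, β < α → z ∈ closure (V β).2) ∧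
      (∀ γ, α ≤ γ → γ < w1 → z ∈ closure (V γ).1) := by
    intro α hα
    set Z : {β : Ordinal.{0} // β < w1} → Set X := fun β =>
      if (β : Ordinal) < α then closure (V β).2 else closure (V β).1 with hZ
    have hZcl : ∀ β, IsClosed (Z β) := by
      intro β
      by_cases h : (β : Ordinal) < α <;> simp [hZ, h, isClosed_closure]
    have hZne : (⋂ β, Z β).Nonempty := by
      by_contra hempty
      rw [Set.not_nonempty_iff_eq_empty] at hempty
      obtain ⟨u, hu⟩ := IsCompact.elim_finite_subfamily_closed isCompact_univ Z hZcl
        (by rw [hempty, Set.inter_empty])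
      set uo : Finset Ordinal := u.image Subtype.val with huo
      have huow : ∀ β ∈ uo, β < w1 := by
        intro β hβ
        obtain ⟨i, _, rfl⟩ := Finset.mem_image.mp hβ
        exact i.2
      set F1 : Finset Ordinal := uo.filter (fun β => β < α) with hF1
      set F0 : Finset Ordinal := uo.filter (fun β => ¬ β < α) with hF0
      have hvalid : JSzProof.Valid w1 F1 F0 := by
        refine ⟨?_, ?_, ?_⟩
        · intro β hβ
          exact huow β (Finset.mem_filter.mp hβ).1
        · intro γ hγ
          exact huow γ (Finset.mem_filter.mp hγ).1
        · intro β hβ γ hγ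
          have h1 : β < α := (Finset.mem_filter.mp hβ).2
          have h2 : ¬ γ < α := (Finset.mem_filter.mp hγ).2
          exact lt_of_lt_of_le h1 (not_lt.mp h2)
      obtain ⟨y, hy⟩ := hpos F1 F0 hvalid 0
      have hyZ : y ∈ Set.univ ∩ ⋂ i ∈ u, Z i := by
        refine ⟨trivial, Set.mem_iInter₂.mpr fun i hi => ?_⟩
        have hiuo : (i : Ordinal) ∈ uo := Finset.mem_image.mpr ⟨i, hi, rfl⟩
        by_cases h : (i : Ordinal) < α
        · have hmem : (i : Ordinal) ∈ F1 := Finset.mem_filter.mpr ⟨hiuo, h⟩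
          have := (JSzProof.mem_patt.mp hy.2).1 _ hmem
          simp only [hZ, if_pos h]
          exact subset_closure this
        · have hmem : (i : Ordinal) ∈ F0 := Finset.mem_filter.mpr ⟨hiuo, h⟩
          have := (JSzProof.mem_patt.mp hy.2).2 _ hmem
          simp only [hZ, if_neg h]
          exact subset_closure this
      rw [hu] at hyZ
      exact hyZ
    obtain ⟨z, hz⟩ := hZne
    refine ⟨z, fun β hβ => ?_, fun γ hγ1 hγ2 => ?_⟩
    · have := mem_iInter.mp hz ⟨β, hβ.trans hα⟩
      simpa only [hZ, if_pos hβ] using this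
    · have := mem_iInter.mp hz ⟨γ, hγ2⟩
      simpa only [hZ, if_neg (not_lt.mpr hγ1)] using this
  have hx' : ∀ α : Ordinal.{0}, ∃ z : X, α < w1 →
      ((∀ β, β < α → z ∈ closure (V β).2) ∧
       (∀ γ, α ≤ γ → γ < w1 → z ∈ closure (V γ).1)) := by
    intro α
    by_cases h : α < w1
    · obtain ⟨z, hz⟩ := hx α h
      exact ⟨z, fun _ => hz⟩
    · exact ⟨(hFne 0).choose, fun h' => absurd h' h⟩
  choose x hxspec using hx'
  -- limit facts about w1
  have hw1lim : Order.IsSuccLimit w1 := Cardinal.isSuccLimit_ord (Cardinal.aleph0_le_aleph 1)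
  have hw1pos : (0 : Ordinal) < w1 := hw1lim.pos
  have hsucclt : ∀ α : Ordinal.{0}, α < w1 → α + 1 < w1 := by
    intro α hα
    rw [Ordinal.add_one_eq_succ]
    exact hw1lim.succ_lt hα
  -- the cluster point p of the tails
  set Tl : {α : Ordinal.{0} // α < w1} → Set X :=
    fun α => {p | ∃ γ, (α : Ordinal) < γ ∧ γ < w1 ∧ p = x γ} with hTl
  have hTlmono : ∀ a b : {α : Ordinal // α < w1}, a ≤ b → Tl b ⊆ Tl a := by
    rintro a b hab p ⟨γ, h1, h2, rfl⟩
    exact ⟨γ, lt_of_le_of_lt hab h1, h2, rfl⟩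
  have hTlne : ∀ a, (Tl a).Nonempty := by
    rintro ⟨α, hα⟩
    refine ⟨x (α + 1), α + 1, ?_, hsucclt α hα, rfl⟩
    rw [Ordinal.add_one_eq_succ]
    exact Order.lt_succ α
  have hdir : Directed (fun a b : Set X => a ⊇ b) (fun a => closure (Tl a)) := by
    intro a b
    rcases le_total a b with h | h
    · exact ⟨b, closure_mono (hTlmono a b h), subset_rfl⟩
    · exact ⟨a, subset_rfl, closure_mono (hTlmono b a h)⟩
  haveI : Nonempty {α : Ordinal.{0} // α < w1} := ⟨⟨0, hw1pos⟩⟩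
  obtain ⟨p, hp⟩ := IsCompact.nonempty_iInter_of_directed_nonempty_isCompact_isClosed
    (fun a => closure (Tl a)) hdir (fun a => ((hTlne a).mono subset_closure))
    (fun a => isClosed_closure.isCompact) (fun a => isClosed_closure)
  have hpmem : ∀ a, p ∈ closure (Tl a) := mem_iInter.mp hp
  -- apply countable tightness
  have hpS : p ∈ closure {q | ∃ γ, γ < w1 ∧ q = x γ} := by
    refine closure_mono ?_ (hpmem ⟨0, hw1pos⟩)
    rintro q ⟨γ, _, h2, rfl⟩
    exact ⟨γ, h2, rfl⟩
  obtain ⟨T, hTS, hTc, hpT⟩ := hct _ p hpS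
  rcases T.eq_empty_or_nonempty with rfl | hTne
  · rw [closure_empty] at hpT
    exact hpT
  -- bound the indices
  obtain ⟨f, hf⟩ := Set.Countable.exists_eq_range hTc hTne
  have hfidx : ∀ n : ℕ, ∃ γ, γ < w1 ∧ f n = x γ := by
    intro n
    have : f n ∈ T := by rw [hf]; exact ⟨n, rfl⟩
    exact hTS this
  choose g hg1 hg2 using hfidx
  set δ : Ordinal.{0} := iSup (fun n => Order.succ (g n)) with hδdef
  have hδlt : δ < w1 := by
    rw [hw1def, Cardinal.ord_aleph]
    apply Ordinal.iSup_lt_omega_one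
    intro n
    rw [← Cardinal.ord_aleph, ← hw1def, ← Ordinal.add_one_eq_succ]
    exact hsucclt _ (hg1 n)
  have hglt : ∀ n, g n < δ := by
    intro n
    have : Order.succ (g n) ≤ δ :=
      le_ciSup (Ordinal.bddAbove_range _) n
    exact lt_of_lt_of_le (Order.lt_succ (g n)) this
  -- p lies in both disjoint closed sets at stage δ
  have hp0 : p ∈ closure (V δ).1 := by
    have hTsub : T ⊆ closure (V δ).1 := by
      intro t ht
      rw [hf] at ht
      obtain ⟨n, rfl⟩ := ht
      rw [hg2 n]
      exact (hxspec (g n) (hg1 n)).2 δ (le_of_lt (hglt n)) hδlt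
    exact closure_minimal hTsub isClosed_closure hpT
  have hp1 : p ∈ closure (V δ).2 := by
    have hTlsub : Tl ⟨δ, hδlt⟩ ⊆ closure (V δ).2 := by
      rintro q ⟨γ, h1, h2, rfl⟩
      exact (hxspec γ h2).1 δ h1
    exact closure_minimal hTlsub isClosed_closure (hpmem ⟨δ, hδlt⟩)
  have hdisj := (hgood δ hδlt).disj
  have : p ∈ (∅ : Set X) := hdisj ▸ (⟨hp0, hp1⟩ : p ∈ closure (V δ).1 ∩ closure (V δ).2)
  exact this
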